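/- Fix a, b ∈ ℂ. Let q1, p1, q2, p2 be complex-analytic functions of (t1, t2) on an open domain D ⊆ ℂ² on which t1 ≠ t2, satisfying the Hamiltonian system ∂qₖ/∂tⱼ = ∂Hⱼ/∂pₖ and ∂pₖ/∂tⱼ = −∂Hⱼ/∂qₖ for k, j ∈ {1,2}, where H1 = HG52_1(a,b;t1,t2;q1,p1,q2,p2) and H2 = HG52_2(a,b;t1,t2;q1,p1,q2,p2). Define the 3×3 matrices A3 := diag(0,−1,−1), A2 := [[0,−1,−1],[−p1,0,0],[−p2,0,0]], A1 := [[−p1−p2, −q1, −q2],[p1q1 − a, p1 − t1, p1],[p2q2 − b, p2, p2 − t2]], A(x) := A3·x² + A2·x + A1, B1(x) := −diag(0,1,0)·x + [[0,−1,0],[−p1, (p2(q1−q2)+b)/(t1−t2) + q1, (p1(q1−q2)−a)/(t1−t2)],[0, (p2(q2−q1)−b)/(t1−t2), (p1(q2−q1)+a)/(t1−t2)]], B2(x) := −diag(0,0,1)·x + [[0,0,−1],[0, (p2(q1−q2)+b)/(t2−t1), (p1(q1−q2)−a)/(t2−t1)],[−p2, (p2(q2−q1)−b)/(t2−t1), (p1(q2−q1)+a)/(t2−t1)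 + q2]]. Then for j = 1, 2, for all x ∈ ℂ and all (t1,t2) ∈ D: ∂A(x)/∂tⱼ − ∂Bⱼ(x)/∂x + A(x)·Bⱼ(x) − Bⱼ(x)·A(x) = 0. -/

import Mathlib

open Filter Topology Matrix

/-- Second Painlevé Hamiltonian `HII(a;t;q,p)`. -/
noncomputable def HII (a t q p : ℂ) : ℂ := p ^ 2 - (q ^ 2 + t) * p - a * q

/-- Degenerate Garnier Hamiltonian of pattern 5/2+1+1 (first time variable). -/
noncomputable def HG52_1 (a b t1 t2 q1 p1 q2 p2 : ℂ) : ℂ :=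
  HII (-a) t1 q1 p1 + p1 * p2
    + (1 / (t1 - t2)) * (p1 * (q1 - q2) - a) * (p2 * (q2 - q1) - b)

/-- Degenerate Garnier Hamiltonian of pattern 5/2+1+1 (second time variable). -/
noncomputable def HG52_2 (a b t1 t2 q1 p1 q2 p2 : ℂ) : ℂ :=
  HII (-b) t2 q2 p2 + p1 * p2
    + (1 / (t2 - t1)) * (p1 * (q1 - q2) - a) * (p2 * (q2 - q1) - b)

/-- The matrix `A(x) = A3 x² + A2 x + A1` of the 5/2+1+1 linear problem. -/
noncomputable def A52 (a b t1 t2 q1 p1 q2 p2 x : ℂ) : Matrix (Fin 3) (Fin 3) ℂ :=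
  x ^ 2 • Matrix.diagonal ![0, -1, -1]
    + x • !![0, -1, -1; -p1, 0, 0; -p2, 0, 0]
    + !![-p1 - p2, -q1, -q2;
         p1 * q1 - a, p1 - t1, p1;
         p2 * q2 - b, p2, p2 - t2]

/-- The matrix `B1(x)` of the 5/2+1+1 deformation. -/
noncomputable def B52_1 (a b t1 t2 q1 p1 q2 p2 x : ℂ) : Matrix (Fin 3) (Fin 3) ℂ :=
  -(x • Matrix.diagonal ![0, 1, 0])
    + !![0, -1, 0;
         -p1, (p2 * (q1 - q2) + b) / (t1 - t2) + q1, (p1 * (q1 - q2) - a) / (t1 - t2);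
         0, (p2 * (q2 - q1) - b) / (t1 - t2), (p1 * (q2 - q1) + a) / (t1 - t2)]

/-- The matrix `B2(x)` of the 5/2+1+1 deformation. -/
noncomputable def B52_2 (a b t1 t2 q1 p1 q2 p2 x : ℂ) : Matrix (Fin 3) (Fin 3) ℂ :=
  -(x • Matrix.diagonal ![0, 0, 1])
    + !![0, 0, -1;
         0, (p2 * (q1 - q2) + b) / (t2 - t1), (p1 * (q1 - q2) - a) / (t2 - t1);
         -p2, (p2 * (q2 - q1) - b) / (t2 - t1), (p1 * (q2 - q1) + a) / (t2 - t1) + q2]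

noncomputable def DQ11 (a b t1 t2 q1 p1 q2 p2 : ℂ) : ℂ :=
  2 * p1 - q1 ^ 2 - t1 + p2 + (q1 - q2) * (p2 * (q2 - q1) - b) / (t1 - t2)
noncomputable def DP11 (a b t1 t2 q1 p1 q2 p2 : ℂ) : ℂ :=
  2 * q1 * p1 - a - (p1 * (p2 * (q2 - q1) - b) - (p1 * (q1 - q2) - a) * p2) / (t1 - t2)
noncomputable def DQ21 (a b t1 t2 q1 p1 q2 p2 : ℂ) : ℂ :=
  p1 + (p1 * (q1 - q2) - a) * (q2 - q1) / (t1 - t2)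
noncomputable def DP21 (a b t1 t2 q1 p1 q2 p2 : ℂ) : ℂ :=
  (p1 * (p2 * (q2 - q1) - b) - (p1 * (q1 - q2) - a) * p2) / (t1 - t2)
noncomputable def DQ12 (a b t1 t2 q1 p1 q2 p2 : ℂ) : ℂ :=
  p2 + (q1 - q2) * (p2 * (q2 - q1) - b) / (t2 - t1)
noncomputable def DP12 (a b t1 t2 q1 p1 q2 p2 : ℂ) : ℂ :=
  -((p1 * (p2 * (q2 - q1) - b) - (p1 * (q1 - q2) - a) * p2) / (t2 - t1))
noncomputable def DQ22 (a b t1 t2 q1 p1 q2 p2 : ℂ) : ℂ :=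
  2 * p2 - q2 ^ 2 - t2 + p1 + (p1 * (q1 - q2) - a) * (q2 - q1) / (t2 - t1)
noncomputable def DP22 (a b t1 t2 q1 p1 q2 p2 : ℂ) : ℂ :=
  2 * q2 * p2 - b + (p1 * (p2 * (q2 - q1) - b) - (p1 * (q1 - q2) - a) * p2) / (t2 - t1)

lemma hasDerivAt_quad (c2 c1 c0 w : ℂ) :
    HasDerivAt (fun s : ℂ => c2 * s ^ 2 + c1 * s + c0) (2 * c2 * w + c1) w := by
  have h := (((hasDerivAt_pow 2 w).const_mul c2).add ((hasDerivAt_id' w).const_mul c1)).add_const c0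
  refine h.congr_deriv ?_
  push_cast
  ring

lemma deriv_eq_of_quad {f : ℂ → ℂ} {w d : ℂ} (c2 c1 c0 : ℂ)
    (hf : f = fun s => c2 * s ^ 2 + c1 * s + c0) (hd : 2 * c2 * w + c1 = d) :
    deriv f w = d := by
  rw [hf, (hasDerivAt_quad c2 c1 c0 w).deriv]
  exact hd

lemma dH1p1 (a b t1 t2 q1 p1 q2 p2 : ℂ) :
    deriv (fun w => HG52_1 a b t1 t2 q1 w q2 p2) p1 = DQ11 a b t1 t2 q1 p1 q2 p2 :=
  deriv_eq_of_quad 1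
    (-(q1 ^ 2 + t1) + p2 + (1 / (t1 - t2)) * ((q1 - q2) * (p2 * (q2 - q1) - b)))
    (a * q1 - (1 / (t1 - t2)) * (a * (p2 * (q2 - q1) - b)))
    (by funext w; simp only [HG52_1, HII]; ring)
    (by simp only [DQ11]; ring)

lemma dH1q1 (a b t1 t2 q1 p1 q2 p2 : ℂ) :
    deriv (fun w => HG52_1 a b t1 t2 w p1 q2 p2) q1 = -DP11 a b t1 t2 q1 p1 q2 p2 :=
  deriv_eq_of_quad (-p1 - (1 / (t1 - t2)) * (p1 * p2))
    (a + (1 / (t1 - t2)) * (p1 * (p2 * q2 - b) + (p1 * q2 + a) * p2))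
    (p1 ^ 2 - t1 * p1 + p1 * p2 - (1 / (t1 - t2)) * ((p1 * q2 + a) * (p2 * q2 - b)))
    (by funext w; simp only [HG52_1, HII]; ring)
    (by simp only [DP11]; ring)

lemma dH1p2 (a b t1 t2 q1 p1 q2 p2 : ℂ) :
    deriv (fun w => HG52_1 a b t1 t2 q1 p1 q2 w) p2 = DQ21 a b t1 t2 q1 p1 q2 p2 :=
  deriv_eq_of_quad 0
    (p1 + (1 / (t1 - t2)) * ((p1 * (q1 - q2) - a) * (q2 - q1)))
    (p1 ^ 2 - (q1 ^ 2 + t1) * p1 + a * q1 - (1 / (t1 - t2)) * ((p1 * (q1 - q2) - a) * b))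
    (by funext w; simp only [HG52_1, HII]; ring)
    (by simp only [DQ21]; ring)

lemma dH1q2 (a b t1 t2 q1 p1 q2 p2 : ℂ) :
    deriv (fun w => HG52_1 a b t1 t2 q1 p1 w p2) q2 = -DP21 a b t1 t2 q1 p1 q2 p2 :=
  deriv_eq_of_quad (-(1 / (t1 - t2)) * (p1 * p2))
    ((1 / (t1 - t2)) * ((p1 * q1 - a) * p2 + p1 * (p2 * q1 + b)))
    (p1 ^ 2 - (q1 ^ 2 + t1) * p1 + a * q1 + p1 * p2
      - (1 / (t1 - t2)) * ((p1 * q1 - a) * (p2 * q1 + b)))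
    (by funext w; simp only [HG52_1, HII]; ring)
    (by simp only [DP21]; ring)

lemma dH2p1 (a b t1 t2 q1 p1 q2 p2 : ℂ) :
    deriv (fun w => HG52_2 a b t1 t2 q1 w q2 p2) p1 = DQ12 a b t1 t2 q1 p1 q2 p2 :=
  deriv_eq_of_quad 0
    (p2 + (1 / (t2 - t1)) * ((q1 - q2) * (p2 * (q2 - q1) - b)))
    (p2 ^ 2 - (q2 ^ 2 + t2) * p2 + b * q2 - (1 / (t2 - t1)) * (a * (p2 * (q2 - q1) - b)))
    (by funext w; simp only [HG52_2, HII]; ring)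
    (by simp only [DQ12]; ring)

lemma dH2q1 (a b t1 t2 q1 p1 q2 p2 : ℂ) :
    deriv (fun w => HG52_2 a b t1 t2 w p1 q2 p2) q1 = -DP12 a b t1 t2 q1 p1 q2 p2 :=
  deriv_eq_of_quad (-((1 / (t2 - t1)) * (p1 * p2)))
    ((1 / (t2 - t1)) * (p1 * (p2 * q2 - b) + (p1 * q2 + a) * p2))
    (p2 ^ 2 - (q2 ^ 2 + t2) * p2 + b * q2 + p1 * p2
      - (1 / (t2 - t1)) * ((p1 * q2 + a) * (p2 * q2 - b)))
    (by funext w; simp only [HG52_2, HII]; ring)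
    (by simp only [DP12]; ring)

lemma dH2p2 (a b t1 t2 q1 p1 q2 p2 : ℂ) :
    deriv (fun w => HG52_2 a b t1 t2 q1 p1 q2 w) p2 = DQ22 a b t1 t2 q1 p1 q2 p2 :=
  deriv_eq_of_quad 1
    (-(q2 ^ 2 + t2) + p1 + (1 / (t2 - t1)) * ((p1 * (q1 - q2) - a) * (q2 - q1)))
    (b * q2 - (1 / (t2 - t1)) * ((p1 * (q1 - q2) - a) * b))
    (by funext w; simp only [HG52_2, HII]; ring)
    (by simp only [DQ22]; ring)

lemma dH2q2 (a b t1 t2 q1 p1 q2 p2 : ℂ) :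
    deriv (fun w => HG52_2 a b t1 t2 q1 p1 w p2) q2 = -DP22 a b t1 t2 q1 p1 q2 p2 :=
  deriv_eq_of_quad (-p2 - (1 / (t2 - t1)) * (p1 * p2))
    (b + (1 / (t2 - t1)) * ((p1 * q1 - a) * p2 + p1 * (p2 * q1 + b)))
    (p2 ^ 2 - t2 * p2 + p1 * p2 - (1 / (t2 - t1)) * ((p1 * q1 - a) * (p2 * q1 + b)))
    (by funext w; simp only [HG52_2, HII]; ring)
    (by simp only [DP22]; ring)

noncomputable def DA1 (a b t1 t2 q1 p1 q2 p2 x : ℂ) : Matrix (Fin 3) (Fin 3) ℂ :=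
  !![-(DP11 a b t1 t2 q1 p1 q2 p2) - DP21 a b t1 t2 q1 p1 q2 p2,
       -(DQ11 a b t1 t2 q1 p1 q2 p2), -(DQ21 a b t1 t2 q1 p1 q2 p2);
     DP11 a b t1 t2 q1 p1 q2 p2 * q1 + p1 * DQ11 a b t1 t2 q1 p1 q2 p2
       - x * DP11 a b t1 t2 q1 p1 q2 p2,
       DP11 a b t1 t2 q1 p1 q2 p2 - 1, DP11 a b t1 t2 q1 p1 q2 p2;
     DP21 a b t1 t2 q1 p1 q2 p2 * q2 + p2 * DQ21 a b t1 t2 q1 p1 q2 p2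
       - x * DP21 a b t1 t2 q1 p1 q2 p2,
       DP21 a b t1 t2 q1 p1 q2 p2, DP21 a b t1 t2 q1 p1 q2 p2]

noncomputable def DA2 (a b t1 t2 q1 p1 q2 p2 x : ℂ) : Matrix (Fin 3) (Fin 3) ℂ :=
  !![-(DP12 a b t1 t2 q1 p1 q2 p2) - DP22 a b t1 t2 q1 p1 q2 p2,
       -(DQ12 a b t1 t2 q1 p1 q2 p2), -(DQ22 a b t1 t2 q1 p1 q2 p2);
     DP12 a b t1 t2 q1 p1 q2 p2 * q1 + p1 * DQ12 a b t1 t2 q1 p1 q2 p2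
       - x * DP12 a b t1 t2 q1 p1 q2 p2,
       DP12 a b t1 t2 q1 p1 q2 p2, DP12 a b t1 t2 q1 p1 q2 p2;
     DP22 a b t1 t2 q1 p1 q2 p2 * q2 + p2 * DQ22 a b t1 t2 q1 p1 q2 p2
       - x * DP22 a b t1 t2 q1 p1 q2 p2,
       DP22 a b t1 t2 q1 p1 q2 p2, DP22 a b t1 t2 q1 p1 q2 p2 - 1]

lemma derivB1 (a b t1 t2 q1 p1 q2 p2 x : ℂ) (i j : Fin 3) :
    deriv (fun y => B52_1 a b t1 t2 q1 p1 q2 p2 y i j) x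
      = -((Matrix.diagonal ![0, 1, 0] : Matrix (Fin 3) (Fin 3) ℂ) i j) := by
  have hfun : (fun y => B52_1 a b t1 t2 q1 p1 q2 p2 y i j)
      = fun y => (-((Matrix.diagonal ![0, 1, 0] : Matrix (Fin 3) (Fin 3) ℂ) i j)) * y
          + B52_1 a b t1 t2 q1 p1 q2 p2 0 i j := by
    funext y
    simp only [B52_1, Matrix.add_apply, Matrix.neg_apply, Matrix.smul_apply, smul_eq_mul]
    ring
  rw [hfun]
  simpa using (((hasDerivAt_id' x).const_mul
    (-((Matrix.diagonal ![0, 1, 0] : Matrix (Fin 3) (Fin 3) ℂ) i j))).add_const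
      (B52_1 a b t1 t2 q1 p1 q2 p2 0 i j)).deriv

lemma derivB2 (a b t1 t2 q1 p1 q2 p2 x : ℂ) (i j : Fin 3) :
    deriv (fun y => B52_2 a b t1 t2 q1 p1 q2 p2 y i j) x
      = -((Matrix.diagonal ![0, 0, 1] : Matrix (Fin 3) (Fin 3) ℂ) i j) := by
  have hfun : (fun y => B52_2 a b t1 t2 q1 p1 q2 p2 y i j)
      = fun y => (-((Matrix.diagonal ![0, 0, 1] : Matrix (Fin 3) (Fin 3) ℂ) i j)) * y
          + B52_2 a b t1 t2 q1 p1 q2 p2 0 i j := by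
    funext y
    simp only [B52_2, Matrix.add_apply, Matrix.neg_apply, Matrix.smul_apply, smul_eq_mul]
    ring
  rw [hfun]
  simpa using (((hasDerivAt_id' x).const_mul
    (-((Matrix.diagonal ![0, 0, 1] : Matrix (Fin 3) (Fin 3) ℂ) i j))).add_const
      (B52_2 a b t1 t2 q1 p1 q2 p2 0 i j)).deriv

set_option maxHeartbeats 1000000 in
lemma key1 (a b t1 t2 q1 p1 q2 p2 x : ℂ) (hS : t1 - t2 ≠ 0) (i j : Fin 3) :
    deriv (fun y => B52_1 a b t1 t2 q1 p1 q2 p2 y i j) x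
      - (A52 a b t1 t2 q1 p1 q2 p2 x * B52_1 a b t1 t2 q1 p1 q2 p2 x
          - B52_1 a b t1 t2 q1 p1 q2 p2 x * A52 a b t1 t2 q1 p1 q2 p2 x) i j
      = DA1 a b t1 t2 q1 p1 q2 p2 x i j := by
  have hu : (t1 - t2) * (t1 - t2)⁻¹ = 1 := mul_inv_cancel₀ hS
  rw [derivB1]
  fin_cases i <;> fin_cases j <;>
    simp [A52, B52_1, DA1, DQ11, DP11, DQ21, DP21, Matrix.mul_apply, Fin.sum_univ_three,
      Matrix.diagonal_apply, Matrix.vecHead, Matrix.vecTail] <;>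
    first
      | linear_combination (-(p1 * q2) + q1 * p1 - a) * hu
      | linear_combination (-(q2 * p2) + q1 * p2 + b) * hu
      | ring

set_option maxHeartbeats 1000000 in
lemma key2 (a b t1 t2 q1 p1 q2 p2 x : ℂ) (hS : t2 - t1 ≠ 0) (i j : Fin 3) :
    deriv (fun y => B52_2 a b t1 t2 q1 p1 q2 p2 y i j) x
      - (A52 a b t1 t2 q1 p1 q2 p2 x * B52_2 a b t1 t2 q1 p1 q2 p2 x
          - B52_2 a b t1 t2 q1 p1 q2 p2 x * A52 a b t1 t2 q1 p1 q2 p2 x) i j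
      = DA2 a b t1 t2 q1 p1 q2 p2 x i j := by
  have hv : (t2 - t1) * (t2 - t1)⁻¹ = 1 := mul_inv_cancel₀ hS
  rw [derivB2]
  fin_cases i <;> fin_cases j <;>
    simp [A52, B52_2, DA2, DQ12, DP12, DQ22, DP22, Matrix.mul_apply, Fin.sum_univ_three,
      Matrix.diagonal_apply, Matrix.vecHead, Matrix.vecTail] <;>
    first
      | linear_combination (p1 * q2 - q1 * p1 + a) * hv
      | linear_combination (q2 * p2 - q1 * p2 - b) * hv
      | ring

section entry
variable {q1f p1f q2f p2f : ℂ → ℂ} {t d1 d2 d3 d4 : ℂ}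

lemma had1_00 (a b t2 x : ℂ) (Hp1 : HasDerivAt p1f d2 t) (Hp2 : HasDerivAt p2f d4 t) :
    HasDerivAt (fun s => A52 a b s t2 (q1f s) (p1f s) (q2f s) (p2f s) x 0 0) (-d2 - d4) t := by
  have e : (fun s => A52 a b s t2 (q1f s) (p1f s) (q2f s) (p2f s) x 0 0)
      = fun s => -p1f s - p2f s := by
    funext s; simp [A52, Matrix.diagonal_apply, Matrix.vecHead, Matrix.vecTail] <;> ring
  rw [e]; exact Hp1.neg.sub Hp2

lemma had1_01 (a b t2 x : ℂ) (Hq1 : HasDerivAt q1f d1 t) :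
    HasDerivAt (fun s => A52 a b s t2 (q1f s) (p1f s) (q2f s) (p2f s) x 0 1) (-d1) t := by
  have e : (fun s => A52 a b s t2 (q1f s) (p1f s) (q2f s) (p2f s) x 0 1)
      = fun s => -x - q1f s := by
    funext s; simp [A52, Matrix.diagonal_apply, Matrix.vecHead, Matrix.vecTail] <;> ring
  rw [e]
  simpa using (Hq1.const_sub (-x))

lemma had1_02 (a b t2 x : ℂ) (Hq2 : HasDerivAt q2f d3 t) :
    HasDerivAt (fun s => A52 a b s t2 (q1f s) (p1f s) (q2f s) (p2f s) x 0 2) (-d3) t := by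
  have e : (fun s => A52 a b s t2 (q1f s) (p1f s) (q2f s) (p2f s) x 0 2)
      = fun s => -x - q2f s := by
    funext s; simp [A52, Matrix.diagonal_apply, Matrix.vecHead, Matrix.vecTail] <;> ring
  rw [e]
  simpa using (Hq2.const_sub (-x))

lemma had1_10 (a b t2 x : ℂ) (Hq1 : HasDerivAt q1f d1 t) (Hp1 : HasDerivAt p1f d2 t) :
    HasDerivAt (fun s => A52 a b s t2 (q1f s) (p1f s) (q2f s) (p2f s) x 1 0)
      (d2 * q1f t + p1f t * d1 - x * d2) t := by
  have e : (fun s => A52 a b s t2 (q1f s) (p1f s) (q2f s) (p2f s) x 1 0)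
      = fun s => p1f s * q1f s - x * p1f s - a := by
    funext s; simp [A52, Matrix.diagonal_apply, Matrix.vecHead, Matrix.vecTail] <;> ring
  rw [e]; exact ((Hp1.mul Hq1).sub (Hp1.const_mul x)).sub_const a

lemma had1_11 (a b t2 x : ℂ) (Hp1 : HasDerivAt p1f d2 t) :
    HasDerivAt (fun s => A52 a b s t2 (q1f s) (p1f s) (q2f s) (p2f s) x 1 1) (d2 - 1) t := by
  have e : (fun s => A52 a b s t2 (q1f s) (p1f s) (q2f s) (p2f s) x 1 1)
      = fun s => p1f s - s - x ^ 2 := by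
    funext s; simp [A52, Matrix.diagonal_apply, Matrix.vecHead, Matrix.vecTail] <;> ring
  rw [e]; exact (Hp1.sub (hasDerivAt_id' t)).sub_const (x ^ 2)

lemma had1_12 (a b t2 x : ℂ) (Hp1 : HasDerivAt p1f d2 t) :
    HasDerivAt (fun s => A52 a b s t2 (q1f s) (p1f s) (q2f s) (p2f s) x 1 2) d2 t := by
  have e : (fun s => A52 a b s t2 (q1f s) (p1f s) (q2f s) (p2f s) x 1 2)
      = fun s => p1f s := by
    funext s; simp [A52, Matrix.diagonal_apply, Matrix.vecHead, Matrix.vecTail] <;> ring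
  rw [e]; exact Hp1

lemma had1_20 (a b t2 x : ℂ) (Hq2 : HasDerivAt q2f d3 t) (Hp2 : HasDerivAt p2f d4 t) :
    HasDerivAt (fun s => A52 a b s t2 (q1f s) (p1f s) (q2f s) (p2f s) x 2 0)
      (d4 * q2f t + p2f t * d3 - x * d4) t := by
  have e : (fun s => A52 a b s t2 (q1f s) (p1f s) (q2f s) (p2f s) x 2 0)
      = fun s => p2f s * q2f s - x * p2f s - b := by
    funext s; simp [A52, Matrix.diagonal_apply, Matrix.vecHead, Matrix.vecTail] <;> ring
  rw [e]; exact ((Hp2.mul Hq2).sub (Hp2.const_mul x)).sub_const b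

lemma had1_21 (a b t2 x : ℂ) (Hp2 : HasDerivAt p2f d4 t) :
    HasDerivAt (fun s => A52 a b s t2 (q1f s) (p1f s) (q2f s) (p2f s) x 2 1) d4 t := by
  have e : (fun s => A52 a b s t2 (q1f s) (p1f s) (q2f s) (p2f s) x 2 1)
      = fun s => p2f s := by
    funext s; simp [A52, Matrix.diagonal_apply, Matrix.vecHead, Matrix.vecTail] <;> ring
  rw [e]; exact Hp2

lemma had1_22 (a b t2 x : ℂ) (Hp2 : HasDerivAt p2f d4 t) :
    HasDerivAt (fun s => A52 a b s t2 (q1f s) (p1f s) (q2f s) (p2f s) x 2 2) d4 t := by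
  have e : (fun s => A52 a b s t2 (q1f s) (p1f s) (q2f s) (p2f s) x 2 2)
      = fun s => p2f s - t2 - x ^ 2 := by
    funext s; simp [A52, Matrix.diagonal_apply, Matrix.vecHead, Matrix.vecTail] <;> ring
  rw [e]
  simpa using (Hp2.sub_const t2).sub_const (x ^ 2)

lemma had2_00 (a b t1 x : ℂ) (Hp1 : HasDerivAt p1f d2 t) (Hp2 : HasDerivAt p2f d4 t) :
    HasDerivAt (fun s => A52 a b t1 s (q1f s) (p1f s) (q2f s) (p2f s) x 0 0) (-d2 - d4) t := by
  have e : (fun s => A52 a b t1 s (q1f s) (p1f s) (q2f s) (p2f s) x 0 0)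
      = fun s => -p1f s - p2f s := by
    funext s; simp [A52, Matrix.diagonal_apply, Matrix.vecHead, Matrix.vecTail] <;> ring
  rw [e]; exact Hp1.neg.sub Hp2

lemma had2_01 (a b t1 x : ℂ) (Hq1 : HasDerivAt q1f d1 t) :
    HasDerivAt (fun s => A52 a b t1 s (q1f s) (p1f s) (q2f s) (p2f s) x 0 1) (-d1) t := by
  have e : (fun s => A52 a b t1 s (q1f s) (p1f s) (q2f s) (p2f s) x 0 1)
      = fun s => -x - q1f s := by
    funext s; simp [A52, Matrix.diagonal_apply, Matrix.vecHead, Matrix.vecTail] <;> ring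
  rw [e]
  simpa using (Hq1.const_sub (-x))

lemma had2_02 (a b t1 x : ℂ) (Hq2 : HasDerivAt q2f d3 t) :
    HasDerivAt (fun s => A52 a b t1 s (q1f s) (p1f s) (q2f s) (p2f s) x 0 2) (-d3) t := by
  have e : (fun s => A52 a b t1 s (q1f s) (p1f s) (q2f s) (p2f s) x 0 2)
      = fun s => -x - q2f s := by
    funext s; simp [A52, Matrix.diagonal_apply, Matrix.vecHead, Matrix.vecTail] <;> ring
  rw [e]
  simpa using (Hq2.const_sub (-x))

lemma had2_10 (a b t1 x : ℂ) (Hq1 : HasDerivAt q1f d1 t) (Hp1 : HasDerivAt p1f d2 t) :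
    HasDerivAt (fun s => A52 a b t1 s (q1f s) (p1f s) (q2f s) (p2f s) x 1 0)
      (d2 * q1f t + p1f t * d1 - x * d2) t := by
  have e : (fun s => A52 a b t1 s (q1f s) (p1f s) (q2f s) (p2f s) x 1 0)
      = fun s => p1f s * q1f s - x * p1f s - a := by
    funext s; simp [A52, Matrix.diagonal_apply, Matrix.vecHead, Matrix.vecTail] <;> ring
  rw [e]; exact ((Hp1.mul Hq1).sub (Hp1.const_mul x)).sub_const a

lemma had2_11 (a b t1 x : ℂ) (Hp1 : HasDerivAt p1f d2 t) :
    HasDerivAt (fun s => A52 a b t1 s (q1f s) (p1f s) (q2f s) (p2f s) x 1 1) d2 t := by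
  have e : (fun s => A52 a b t1 s (q1f s) (p1f s) (q2f s) (p2f s) x 1 1)
      = fun s => p1f s - t1 - x ^ 2 := by
    funext s; simp [A52, Matrix.diagonal_apply, Matrix.vecHead, Matrix.vecTail] <;> ring
  rw [e]
  simpa using (Hp1.sub_const t1).sub_const (x ^ 2)

lemma had2_12 (a b t1 x : ℂ) (Hp1 : HasDerivAt p1f d2 t) :
    HasDerivAt (fun s => A52 a b t1 s (q1f s) (p1f s) (q2f s) (p2f s) x 1 2) d2 t := by
  have e : (fun s => A52 a b t1 s (q1f s) (p1f s) (q2f s) (p2f s) x 1 2)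
      = fun s => p1f s := by
    funext s; simp [A52, Matrix.diagonal_apply, Matrix.vecHead, Matrix.vecTail] <;> ring
  rw [e]; exact Hp1

lemma had2_20 (a b t1 x : ℂ) (Hq2 : HasDerivAt q2f d3 t) (Hp2 : HasDerivAt p2f d4 t) :
    HasDerivAt (fun s => A52 a b t1 s (q1f s) (p1f s) (q2f s) (p2f s) x 2 0)
      (d4 * q2f t + p2f t * d3 - x * d4) t := by
  have e : (fun s => A52 a b t1 s (q1f s) (p1f s) (q2f s) (p2f s) x 2 0)
      = fun s => p2f s * q2f s - x * p2f s - b := by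
    funext s; simp [A52, Matrix.diagonal_apply, Matrix.vecHead, Matrix.vecTail] <;> ring
  rw [e]; exact ((Hp2.mul Hq2).sub (Hp2.const_mul x)).sub_const b

lemma had2_21 (a b t1 x : ℂ) (Hp2 : HasDerivAt p2f d4 t) :
    HasDerivAt (fun s => A52 a b t1 s (q1f s) (p1f s) (q2f s) (p2f s) x 2 1) d4 t := by
  have e : (fun s => A52 a b t1 s (q1f s) (p1f s) (q2f s) (p2f s) x 2 1)
      = fun s => p2f s := by
    funext s; simp [A52, Matrix.diagonal_apply, Matrix.vecHead, Matrix.vecTail] <;> ring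
  rw [e]; exact Hp2

lemma had2_22 (a b t1 x : ℂ) (Hp2 : HasDerivAt p2f d4 t) :
    HasDerivAt (fun s => A52 a b t1 s (q1f s) (p1f s) (q2f s) (p2f s) x 2 2) (d4 - 1) t := by
  have e : (fun s => A52 a b t1 s (q1f s) (p1f s) (q2f s) (p2f s) x 2 2)
      = fun s => p2f s - s - x ^ 2 := by
    funext s; simp [A52, Matrix.diagonal_apply, Matrix.vecHead, Matrix.vecTail] <;> ring
  rw [e]; exact (Hp2.sub (hasDerivAt_id' t)).sub_const (x ^ 2)

end entry


set_option maxHeartbeats 1000000 in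
/-- The Hamiltonian system of the 5/2+1+1 degenerate Garnier system implies the
zero-curvature (isomonodromy) equations for its Lax pair. -/
theorem stmt4 (a b : ℂ) (D : Set (ℂ × ℂ)) (hD : IsOpen D)
    (hDne : ∀ z ∈ D, z.1 ≠ z.2)
    (q1 p1 q2 p2 : ℂ × ℂ → ℂ)
    (hq1a : AnalyticOnNhd ℂ q1 D) (hp1a : AnalyticOnNhd ℂ p1 D)
    (hq2a : AnalyticOnNhd ℂ q2 D) (hp2a : AnalyticOnNhd ℂ p2 D)
    (hq1t1 : ∀ z ∈ D, HasDerivAt (fun s => q1 (s, z.2))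
      (deriv (fun w => HG52_1 a b z.1 z.2 (q1 z) w (q2 z) (p2 z)) (p1 z)) z.1)
    (hp1t1 : ∀ z ∈ D, HasDerivAt (fun s => p1 (s, z.2))
      (-(deriv (fun w => HG52_1 a b z.1 z.2 w (p1 z) (q2 z) (p2 z)) (q1 z))) z.1)
    (hq2t1 : ∀ z ∈ D, HasDerivAt (fun s => q2 (s, z.2))
      (deriv (fun w => HG52_1 a b z.1 z.2 (q1 z) (p1 z) (q2 z) w) (p2 z)) z.1)
    (hp2t1 : ∀ z ∈ D, HasDerivAt (fun s => p2 (s, z.2))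
      (-(deriv (fun w => HG52_1 a b z.1 z.2 (q1 z) (p1 z) w (p2 z)) (q2 z))) z.1)
    (hq1t2 : ∀ z ∈ D, HasDerivAt (fun s => q1 (z.1, s))
      (deriv (fun w => HG52_2 a b z.1 z.2 (q1 z) w (q2 z) (p2 z)) (p1 z)) z.2)
    (hp1t2 : ∀ z ∈ D, HasDerivAt (fun s => p1 (z.1, s))
      (-(deriv (fun w => HG52_2 a b z.1 z.2 w (p1 z) (q2 z) (p2 z)) (q1 z))) z.2)
    (hq2t2 : ∀ z ∈ D, HasDerivAt (fun s => q2 (z.1, s))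
      (deriv (fun w => HG52_2 a b z.1 z.2 (q1 z) (p1 z) (q2 z) w) (p2 z)) z.2)
    (hp2t2 : ∀ z ∈ D, HasDerivAt (fun s => p2 (z.1, s))
      (-(deriv (fun w => HG52_2 a b z.1 z.2 (q1 z) (p1 z) w (p2 z)) (q2 z))) z.2) :
    ∀ z ∈ D, ∀ x : ℂ, ∀ i j : Fin 3,
      (HasDerivAt
          (fun s => A52 a b s z.2 (q1 (s, z.2)) (p1 (s, z.2)) (q2 (s, z.2)) (p2 (s, z.2)) x i j)
          (deriv (fun y => B52_1 a b z.1 z.2 (q1 z) (p1 z) (q2 z) (p2 z) y i j) x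
            - (A52 a b z.1 z.2 (q1 z) (p1 z) (q2 z) (p2 z) x
                  * B52_1 a b z.1 z.2 (q1 z) (p1 z) (q2 z) (p2 z) x
                - B52_1 a b z.1 z.2 (q1 z) (p1 z) (q2 z) (p2 z) x
                  * A52 a b z.1 z.2 (q1 z) (p1 z) (q2 z) (p2 z) x) i j) z.1)
      ∧
      (HasDerivAt
          (fun s => A52 a b z.1 s (q1 (z.1, s)) (p1 (z.1, s)) (q2 (z.1, s)) (p2 (z.1, s)) x i j)
          (deriv (fun y => B52_2 a b z.1 z.2 (q1 z) (p1 z) (q2 z) (p2 z) y i j) x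
            - (A52 a b z.1 z.2 (q1 z) (p1 z) (q2 z) (p2 z) x
                  * B52_2 a b z.1 z.2 (q1 z) (p1 z) (q2 z) (p2 z) x
                - B52_2 a b z.1 z.2 (q1 z) (p1 z) (q2 z) (p2 z) x
                  * A52 a b z.1 z.2 (q1 z) (p1 z) (q2 z) (p2 z) x) i j) z.2) := by
  
  intro z hz x i j
  obtain ⟨T1, T2⟩ := z
  have hne : T1 ≠ T2 := hDne (T1, T2) hz
  have hS : T1 - T2 ≠ 0 := sub_ne_zero.mpr hne
  have hS' : T2 - T1 ≠ 0 := sub_ne_zero.mpr (Ne.symm hne)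
  have Hq1 : HasDerivAt (fun s => q1 (s, T2))
      (DQ11 a b T1 T2 (q1 (T1, T2)) (p1 (T1, T2)) (q2 (T1, T2)) (p2 (T1, T2))) T1 := by
    have h := hq1t1 (T1, T2) hz; rw [dH1p1] at h; exact h
  have Hp1 : HasDerivAt (fun s => p1 (s, T2))
      (DP11 a b T1 T2 (q1 (T1, T2)) (p1 (T1, T2)) (q2 (T1, T2)) (p2 (T1, T2))) T1 := by
    have h := hp1t1 (T1, T2) hz; rw [dH1q1, neg_neg] at h; exact h
  have Hq2 : HasDerivAt (fun s => q2 (s, T2))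
      (DQ21 a b T1 T2 (q1 (T1, T2)) (p1 (T1, T2)) (q2 (T1, T2)) (p2 (T1, T2))) T1 := by
    have h := hq2t1 (T1, T2) hz; rw [dH1p2] at h; exact h
  have Hp2 : HasDerivAt (fun s => p2 (s, T2))
      (DP21 a b T1 T2 (q1 (T1, T2)) (p1 (T1, T2)) (q2 (T1, T2)) (p2 (T1, T2))) T1 := by
    have h := hp2t1 (T1, T2) hz; rw [dH1q2, neg_neg] at h; exact h
  have Kq1 : HasDerivAt (fun s => q1 (T1, s))
      (DQ12 a b T1 T2 (q1 (T1, T2)) (p1 (T1, T2)) (q2 (T1, T2)) (p2 (T1, T2))) T2 := by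
    have h := hq1t2 (T1, T2) hz; rw [dH2p1] at h; exact h
  have Kp1 : HasDerivAt (fun s => p1 (T1, s))
      (DP12 a b T1 T2 (q1 (T1, T2)) (p1 (T1, T2)) (q2 (T1, T2)) (p2 (T1, T2))) T2 := by
    have h := hp1t2 (T1, T2) hz; rw [dH2q1, neg_neg] at h; exact h
  have Kq2 : HasDerivAt (fun s => q2 (T1, s))
      (DQ22 a b T1 T2 (q1 (T1, T2)) (p1 (T1, T2)) (q2 (T1, T2)) (p2 (T1, T2))) T2 := by
    have h := hq2t2 (T1, T2) hz; rw [dH2p2] at h; exact h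
  have Kp2 : HasDerivAt (fun s => p2 (T1, s))
      (DP22 a b T1 T2 (q1 (T1, T2)) (p1 (T1, T2)) (q2 (T1, T2)) (p2 (T1, T2))) T2 := by
    have h := hp2t2 (T1, T2) hz; rw [dH2q2, neg_neg] at h; exact h
  dsimp only
  constructor
  · rw [key1 a b T1 T2 (q1 (T1, T2)) (p1 (T1, T2)) (q2 (T1, T2)) (p2 (T1, T2)) x hS i j]
    fin_cases i <;> fin_cases j
    · exact had1_00 a b T2 x Hp1 Hp2
    · exact had1_01 a b T2 x Hq1
    · exact had1_02 a b T2 x Hq2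
    · exact had1_10 a b T2 x Hq1 Hp1
    · exact had1_11 a b T2 x Hp1
    · exact had1_12 a b T2 x Hp1
    · exact had1_20 a b T2 x Hq2 Hp2
    · exact had1_21 a b T2 x Hp2
    · exact had1_22 a b T2 x Hp2
  · rw [key2 a b T1 T2 (q1 (T1, T2)) (p1 (T1, T2)) (q2 (T1, T2)) (p2 (T1, T2)) x hS' i j]
    fin_cases i <;> fin_cases j
    · exact had2_00 a b T1 x Kp1 Kp2
    · exact had2_01 a b T1 x Kq1
    · exact had2_02 a b T1 x Kq2
    · exact had2_10 a b T1 x Kq1 Kp1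
    · exact had2_11 a b T1 x Kp1
    · exact had2_12 a b T1 x Kp1
    · exact had2_20 a b T1 x Kq2 Kp2
    · exact had2_21 a b T1 x Kp2
    · exact had2_22 a b T1 x Kp2
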